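/- Let ε ≥ 0 and let p ∈ (0,1) satisfy e^{−ε} ≤ p/(1−p) ≤ e^{ε}. Then ln 2 − h(p) ≤ ε²/2, where h(p) = −p ln p − (1−p) ln(1−p) is the binary entropy in nats. Equivalently, a binary random variable whose two posterior probabilities have ratio within [e^{−ε}, e^{ε}] has entropy at least ln 2 − ε²/2 nats (at least 1 − ε²/(2 ln 2) bits). -/

import Mathlib

open Real

/-- `tanh`-type bound: for `x ≥ 0`, `e^x - 1 ≤ (x/2) * (e^x + 1)`. -/
lemma exp_sub_one_le (x : ℝ) (hx : 0 ≤ x) : exp x - 1 ≤ x / 2 * (exp x + 1) := by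
  set f : ℝ → ℝ := fun t => t / 2 * (exp t + 1) - (exp t - 1) with hf
  have hdiff : Differentiable ℝ f := by
    simp only [hf]
    exact ((differentiable_id.div_const 2).mul (Real.differentiable_exp.add_const 1)).sub
      (Real.differentiable_exp.sub_const 1)
  have hmono : MonotoneOn f (Set.Ici 0) := by
    apply monotoneOn_of_deriv_nonneg (convex_Ici 0) hdiff.continuous.continuousOn
      (hdiff.differentiableOn)
    · intro t ht
      have hder : deriv f t = (exp t + 1) / 2 + t / 2 * exp t - exp t := by
        simp only [hf]
        rw [deriv_fun_sub (by fun_prop) (by fun_prop), deriv_fun_sub (by fun_prop) (by fun_prop),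
          deriv_fun_mul (by fun_prop) (by fun_prop)]
        simp [Real.deriv_exp, deriv_div_const]
        ring
      rw [hder]
      have ht0 : 0 ≤ t := le_of_lt (by simpa using ht)
      have h1 : exp t * (1 - t) ≤ 1 := by
        have := Real.add_one_le_exp (-t)
        calc exp t * (1 - t) ≤ exp t * exp (-t) := by
              apply mul_le_mul_of_nonneg_left _ (exp_pos t).le
              linarith
          _ = 1 := by rw [← exp_add]; simp
      nlinarith [exp_pos t]
  have := hmono (Set.self_mem_Ici) (Set.mem_Ici.mpr hx) hx
  simp [hf] at this
  linarith

theorem binary_entropy_lower_bound (ε p : ℝ) (hε : 0 ≤ ε)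
    (hp0 : 0 < p) (hp1 : p < 1)
    (hlo : exp (-ε) ≤ p / (1 - p)) (hhi : p / (1 - p) ≤ exp ε) :
    log 2 - (-(p * log p) - (1 - p) * log (1 - p)) ≤ ε ^ 2 / 2 := by
  have hq : 0 < 1 - p := by linarith
  have he1 : (1:ℝ) ≤ exp ε := by simpa using exp_le_exp.mpr hε
  have hep : 0 < exp ε + 1 := by positivity
  -- upper bound on 2p-1
  have hub : 2 * p - 1 ≤ (exp ε - 1) / (exp ε + 1) := by
    rw [div_le_iff₀ hq] at hhi
    rw [le_div_iff₀ hep]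
    nlinarith
  -- lower bound on 2p-1
  have hlb : -(2 * p - 1) ≤ (exp ε - 1) / (exp ε + 1) := by
    rw [le_div_iff₀ hq] at hlo
    have : exp (-ε) * (exp ε) = 1 := by rw [← exp_add]; simp
    rw [le_div_iff₀ hep]
    have hen : 0 < exp (-ε) := exp_pos _
    nlinarith
  -- tanh bound
  have htanh : (exp ε - 1) / (exp ε + 1) ≤ ε / 2 := by
    rw [div_le_iff₀ hep]
    have := exp_sub_one_le ε hε
    linarith
  have hsq : (2 * p - 1) ^ 2 ≤ ε ^ 2 / 4 := by
    have h1 : |2 * p - 1| ≤ ε / 2 := abs_le.mpr ⟨by linarith, by linarith⟩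
    calc (2 * p - 1) ^ 2 = |2 * p - 1| ^ 2 := (sq_abs _).symm
      _ ≤ (ε / 2) ^ 2 := by nlinarith [abs_nonneg (2 * p - 1)]
      _ = ε ^ 2 / 4 := by ring
  -- entropy bound: log 2 - h(p) ≤ (2p-1)^2
  have hl1 : log (2 * p) ≤ 2 * p - 1 := Real.log_le_sub_one_of_pos (by linarith)
  have hl2 : log (2 * (1 - p)) ≤ 2 * (1 - p) - 1 := Real.log_le_sub_one_of_pos (by linarith)
  have e1 : log (2 * p) = log 2 + log p := log_mul two_ne_zero hp0.ne'
  have e2 : log (2 * (1 - p)) = log 2 + log (1 - p) := log_mul two_ne_zero hq.ne'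
  have key : log 2 - (-(p * log p) - (1 - p) * log (1 - p)) ≤ (2 * p - 1) ^ 2 := by
    have hA : p * log (2 * p) ≤ p * (2 * p - 1) := mul_le_mul_of_nonneg_left hl1 hp0.le
    have hB : (1 - p) * log (2 * (1 - p)) ≤ (1 - p) * (2 * (1 - p) - 1) :=
      mul_le_mul_of_nonneg_left hl2 hq.le
    rw [e1] at hA; rw [e2] at hB
    nlinarith
  nlinarith [sq_nonneg ε]
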